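/- Let C be a hyperbolically bounded subset of H²×H² and let μ > 0. Then there are finitely many elements (c₁,d₁),…,(c_k,d_k) of R×R such that V_{C,μ} = {(u·cᵢ, u·dᵢ) : 1 ≤ i ≤ k, u a unit of R}. -/

import Mathlib

noncomputable section

open scoped Classical
open MeasureTheory

namespace Hilbert

/-- `k₀ = 2` if `k ≡ 1 (mod 4)` and `k₀ = 1` otherwise. -/
def k0 (k : ℕ) : ℝ := if k % 4 = 1 then 2 else 1

/-- `ω = (1 + √k)/k₀`. -/
def omg (k : ℕ) : ℝ := (1 + Real.sqrt k) / k0 k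

/-- `ω' = (1 - √k)/k₀`, the algebraic conjugate of `ω`. -/
def omg' (k : ℕ) : ℝ := (1 - Real.sqrt k) / k0 k

/-- The ring `R = ℤ[ω]`, realized inside `ℝ × ℝ` via the pair of real embeddings
`α ↦ (α, α')` of `K = ℚ(√k)`. -/
def R (k : ℕ) : Subring (ℝ × ℝ) := Subring.closure {(omg k, omg' k)}

/-- The ambient space `ℝ⁴`, with coordinates `(x₁, x₂, y₁, y₂)`. -/
abbrev Pt : Type := ℝ × ℝ × ℝ × ℝ

def x1 (p : Pt) : ℝ := p.1
def x2 (p : Pt) : ℝ := p.2.1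
def y1 (p : Pt) : ℝ := p.2.2.1
def y2 (p : Pt) : ℝ := p.2.2.2

/-- `H² × H²`, identified with an open subset of `ℝ⁴`. -/
def HH : Set Pt := {p | 0 < y1 p ∧ 0 < y2 p}

/-- The coordinate `s₁`, determined by `x₁ = s₁ + s₂ ω`, `x₂ = s₁ + s₂ ω'`. -/
def s1 (k : ℕ) (p : Pt) : ℝ := (omg' k * x1 p - omg k * x2 p) / (omg' k - omg k)

/-- The coordinate `s₂`. -/
def s2 (k : ℕ) (p : Pt) : ℝ := (x1 p - x2 p) / (omg k - omg' k)

/-- The ratio `r = y₁/y₂`. -/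
def rr (p : Pt) : ℝ := y1 p / y2 p

/-- The height `h = y₁ y₂`. -/
def hh (p : Pt) : ℝ := y1 p * y2 p

/-- `‖cZ+d‖ = ((cx₁+d)² + c²y₁²)((c'x₂+d')² + c'²y₂²)`, where `c = (c, c')`, `d = (d, d')`
are given by their two real embeddings. -/
def HNorm (c d : ℝ × ℝ) (p : Pt) : ℝ :=
  ((c.1 * x1 p + d.1) ^ 2 + c.1 ^ 2 * y1 p ^ 2) *
    ((c.2 * x2 p + d.2) ^ 2 + c.2 ^ 2 * y2 p ^ 2)

/-- `S = {(c,d) ∈ R² : cR + dR = R}`. -/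
def Spairs (k : ℕ) : Set (R k × R k) := {cd | Ideal.span {cd.1, cd.2} = ⊤}

/-- `V_{c,d}^≥ = {Z ∈ H²×H² : ‖cZ+d‖ ≥ 1}`. -/
def Vge (k : ℕ) (cd : R k × R k) : Set Pt :=
  {p ∈ HH | 1 ≤ HNorm (cd.1 : ℝ × ℝ) (cd.2 : ℝ × ℝ) p}

/-- `V_{c,d}^≤ = {Z ∈ H²×H² : ‖cZ+d‖ ≤ 1}`. -/
def Vle (k : ℕ) (cd : R k × R k) : Set Pt :=
  {p ∈ HH | HNorm (cd.1 : ℝ × ℝ) (cd.2 : ℝ × ℝ) p ≤ 1}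

/-- `V_{c,d} = {Z ∈ H²×H² : ‖cZ+d‖ = 1}`. -/
def Veq (k : ℕ) (cd : R k × R k) : Set Pt :=
  {p ∈ HH | HNorm (cd.1 : ℝ × ℝ) (cd.2 : ℝ × ℝ) p = 1}

/-- `F₀ = {Z ∈ H²×H² : ‖cZ+d‖ ≥ 1 for all (c,d) ∈ S}`. -/
def F0 (k : ℕ) : Set Pt :=
  {p ∈ HH | ∀ cd ∈ Spairs k, 1 ≤ HNorm (cd.1 : ℝ × ℝ) (cd.2 : ℝ × ℝ) p}

/-- `F_∞ = {(s₁,s₂,r,h) : |s₁| ≤ 1/2, |s₂| ≤ 1/2, ε₀⁻² ≤ r ≤ ε₀²}`, where `ε` stands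
for the fundamental unit `ε₀`. -/
def FInf (k : ℕ) (ε : ℝ) : Set Pt :=
  {p ∈ HH | |s1 k p| ≤ 1 / 2 ∧ |s2 k p| ≤ 1 / 2 ∧ (ε ^ 2)⁻¹ ≤ rr p ∧ rr p ≤ ε ^ 2}

/-- `F = F_∞ ∩ F₀`. -/
def F (k : ℕ) (ε : ℝ) : Set Pt := FInf k ε ∩ F0 k

/-- `SL₂(R)`. -/
abbrev SL (k : ℕ) := Matrix.SpecialLinearGroup (Fin 2) (R k)

/-- Möbius action on the upper half-plane: image of `x + y i` under `(a b; c d)`. -/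
def moeb (a b c d x y : ℝ) : ℝ × ℝ :=
  (((a * x + b) * (c * x + d) + a * c * y ^ 2) / ((c * x + d) ^ 2 + c ^ 2 * y ^ 2),
    y / ((c * x + d) ^ 2 + c ^ 2 * y ^ 2))

/-- The action of `γ ∈ SL₂(R)` on `H²×H²`: `γ` acts on the first factor through the first
embedding and through the conjugate matrix `γ'` (second embedding) on the second factor.
This descends to the Hilbert modular group `PSL₂(R)`. -/
def act (k : ℕ) (g : SL k) (p : Pt) : Pt :=
  ((moeb (g.1 0 0 : ℝ × ℝ).1 (g.1 0 1 : ℝ × ℝ).1 (g.1 1 0 : ℝ × ℝ).1 (g.1 1 1 : ℝ × ℝ).1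
      (x1 p) (y1 p)).1,
   (moeb (g.1 0 0 : ℝ × ℝ).2 (g.1 0 1 : ℝ × ℝ).2 (g.1 1 0 : ℝ × ℝ).2 (g.1 1 1 : ℝ × ℝ).2
      (x2 p) (y2 p)).1,
   (moeb (g.1 0 0 : ℝ × ℝ).1 (g.1 0 1 : ℝ × ℝ).1 (g.1 1 0 : ℝ × ℝ).1 (g.1 1 1 : ℝ × ℝ).1
      (x1 p) (y1 p)).2,
   (moeb (g.1 0 0 : ℝ × ℝ).2 (g.1 0 1 : ℝ × ℝ).2 (g.1 1 0 : ℝ × ℝ).2 (g.1 1 1 : ℝ × ℝ).2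
      (x2 p) (y2 p)).2)

/-- The pair of real embeddings of a unit of `R`. -/
def unitVal (k : ℕ) (u : (R k)ˣ) : ℝ × ℝ := ((u : R k) : ℝ × ℝ)

/-- `e` is the fundamental unit of `R`: the smallest unit of `R` greater than `1`
(with respect to the first embedding). -/
def IsFundUnit (k : ℕ) (e : (R k)ˣ) : Prop :=
  1 < (unitVal k e).1 ∧
    ∀ v : (R k)ˣ, 1 < (unitVal k v).1 → (unitVal k e).1 ≤ (unitVal k v).1

/-- The real number `ε₀ > 1`, the fundamental unit under the first embedding. -/
def eps (k : ℕ) (e : (R k)ˣ) : ℝ := (unitVal k e).1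


/-- The norm `N(c) = c c'` of an element of `R` (as a real number). -/
def Nm (k : ℕ) (c : R k) : ℝ := ((c : ℝ × ℝ)).1 * ((c : ℝ × ℝ)).2

/-- A subset `C` of `H²×H²` is hyperbolically bounded if it is bounded in the
Euclidean metric and `y₁, y₂ > ε` on `C` for some `ε > 0`. -/
def HypBounded (C : Set Pt) : Prop :=
  C ⊆ HH ∧ Bornology.IsBounded C ∧ ∃ ε > (0 : ℝ), ∀ p ∈ C, ε < y1 p ∧ ε < y2 p

/-- `V_{C,μ} = {(c,d) ∈ R × R : ‖cZ+d‖ ≤ μ for some Z ∈ C}`. -/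
def VCmu (k : ℕ) (C : Set Pt) (μ : ℝ) : Set (R k × R k) :=
  {cd | ∃ p ∈ C, HNorm (cd.1 : ℝ × ℝ) (cd.2 : ℝ × ℝ) p ≤ μ}

/-- The conditions (8) of Theorem `FiniteSides` on a pair `(c,d) ∈ R²`. -/
def SCond (k : ℕ) (ε : ℝ) (cd : R k × R k) : Prop :=
  cd.1 ≠ 0 ∧ Ideal.span {cd.1, cd.2} = ⊤ ∧
    |Nm k cd.1| ≤ 2 * k / (k0 k) ^ 2 ∧
    |((cd.2 : ℝ × ℝ)).1 / ((cd.1 : ℝ × ℝ)).1| <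
      ε * Real.sqrt (2 * k / (Nm k cd.1 ^ 2 * (k0 k) ^ 2) - (k0 k) ^ 2 / (2 * k)) +
        (1 + omg k) / 2 ∧
    |((cd.2 : ℝ × ℝ)).2 / ((cd.1 : ℝ × ℝ)).2| <
      ε * Real.sqrt (2 * k / (Nm k cd.1 ^ 2 * (k0 k) ^ 2) - (k0 k) ^ 2 / (2 * k)) +
        (1 - omg' k) / 2

/-- `S₁` is a set of representatives, up to multiplication by units of `R`, of the pairs
`(c,d) ∈ R²` satisfying the conditions `SCond`. -/
def IsRepSet (k : ℕ) (ε : ℝ) (S1 : Set (R k × R k)) : Prop :=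
  (∀ cd ∈ S1, SCond k ε cd) ∧
    (∀ cd : R k × R k, SCond k ε cd →
      ∃ ab ∈ S1, ∃ u : (R k)ˣ, cd.1 = (u : R k) * ab.1 ∧ cd.2 = (u : R k) * ab.2) ∧
    (∀ ab ∈ S1, ∀ ab' ∈ S1,
      (∃ u : (R k)ˣ, ab'.1 = (u : R k) * ab.1 ∧ ab'.2 = (u : R k) * ab.2) → ab = ab')

/-- The family `𝒱_∞ = {V_i^± : i = 1,2,3}`. -/
def VfamInf (k : ℕ) (ε : ℝ) : Set (Set Pt) :=
  { {p ∈ HH | s1 k p = 1 / 2}, {p ∈ HH | s1 k p = -(1 / 2)},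
    {p ∈ HH | s2 k p = 1 / 2}, {p ∈ HH | s2 k p = -(1 / 2)},
    {p ∈ HH | rr p = ε ^ 2}, {p ∈ HH | rr p = (ε ^ 2)⁻¹} }

/-- The family `𝒱 = {V_{c,d} : (c,d) ∈ S, c ≠ 0}`. -/
def Vfam (k : ℕ) : Set (Set Pt) :=
  {V | ∃ cd ∈ Spairs k, cd.1 ≠ 0 ∧ V = Veq k cd}

/-- The family `𝓜 = {γ(M) : γ ∈ Γ, M ∈ 𝒱 ∪ 𝒱_∞}`. -/
def Mfam (k : ℕ) (ε : ℝ) : Set (Set Pt) :=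
  {M | ∃ g : SL k, ∃ V ∈ Vfam k ∪ VfamInf k ε, M = act k g '' V}

/-- `ω` as an element of `R`. -/
def omR (k : ℕ) : R k := ⟨(omg k, omg' k), Subring.subset_closure rfl⟩

/-- The side-pairing transformations: `γ ≠ 1` (in `PSL₂(R)`) such that `F ∩ γ⁻¹(F)` has
Hausdorff dimension `3`. -/
def SidePairings (k : ℕ) (ε : ℝ) : Set (SL k) :=
  {g | g ≠ 1 ∧ g.1 ≠ -1 ∧ dimH (F k ε ∩ act k g⁻¹ '' F k ε) = 3}


-- AUX
def tZ (k : ℕ) : ℤ := if k % 4 = 1 then 1 else 2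
def nZ (k : ℕ) : ℤ := if k % 4 = 1 then (1 - (k:ℤ)) / 4 else 1 - (k:ℤ)

lemma sqrt_sq (k : ℕ) : Real.sqrt k * Real.sqrt k = k :=
  Real.mul_self_sqrt (by positivity)

lemma omg_add_omg' (k : ℕ) : omg k + omg' k = (tZ k : ℝ) := by
  unfold omg omg' k0 tZ
  split <;> push_cast <;> ring

lemma omg_mul_omg' (k : ℕ) : omg k * omg' k = (nZ k : ℝ) := by
  unfold omg omg' k0 nZ
  split
  case isTrue h =>
    obtain ⟨q, hq⟩ : (4:ℤ) ∣ 1 - (k:ℤ) := by omega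
    have h4 : ((1 - (k:ℤ))/4 : ℤ) = q := by omega
    rw [h4]
    have hcast : (1:ℝ) - (k:ℝ) = 4*(q:ℝ) := by exact_mod_cast hq
    have hs := sqrt_sq k
    nlinarith [hs, hcast]
  case isFalse h =>
    have hs := sqrt_sq k
    push_cast
    nlinarith [hs]

def Lat (k : ℕ) : Subring (ℝ × ℝ) where
  carrier := {p | ∃ a b : ℤ, p = ((a:ℝ) + b * omg k, (a:ℝ) + b * omg' k)}
  zero_mem' := ⟨0, 0, by norm_num; rfl⟩
  one_mem' := ⟨1, 0, by norm_num; rfl⟩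
  add_mem' := by
    rintro p q ⟨a,b,rfl⟩ ⟨c,d,rfl⟩
    exact ⟨a+c, b+d, by push_cast [Prod.ext_iff, Prod.fst_add, Prod.snd_add]; constructor <;> ring⟩
  neg_mem' := by
    rintro p ⟨a,b,rfl⟩
    exact ⟨-a, -b, by push_cast [Prod.ext_iff, Prod.fst_neg, Prod.snd_neg]; constructor <;> ring⟩
  mul_mem' := by
    rintro p q ⟨a,b,rfl⟩ ⟨c,d,rfl⟩
    refine ⟨a*c - b*d*nZ k, a*d + b*c + b*d*tZ k, ?_⟩
    have ht := omg_add_omg' k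
    have hn := omg_mul_omg' k
    rw [Prod.ext_iff]
    constructor
    · show ((a:ℝ) + b * omg k) * ((c:ℝ) + d * omg k) = _
      push_cast
      rw [← ht, ← hn]; ring
    · show ((a:ℝ) + b * omg' k) * ((c:ℝ) + d * omg' k) = _
      push_cast
      rw [← ht, ← hn]; ring

lemma R_eq_Lat (k : ℕ) : R k = Lat k := by
  apply le_antisymm
  · apply Subring.closure_le.mpr
    rintro p hp
    rw [Set.mem_singleton_iff] at hp
    subst hp
    exact ⟨0, 1, by norm_num⟩
  · rintro p ⟨a,b,rfl⟩
    have hω : ((omg k, omg' k) : ℝ×ℝ) ∈ R k := Subring.subset_closure rfl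
    have he : ((a:ℝ)+b*omg k, (a:ℝ)+b*omg' k)
        = ((a:ℤ) : ℝ×ℝ) + ((b:ℤ) : ℝ×ℝ) * (omg k, omg' k) := by
      rw [Prod.ext_iff]; constructor <;> simp
    rw [he]
    exact add_mem (intCast_mem _ a) (mul_mem (intCast_mem _ b) hω)

lemma mem_R_iff {k : ℕ} {p : ℝ × ℝ} :
    p ∈ R k ↔ ∃ a b : ℤ, p = ((a:ℝ) + b * omg k, (a:ℝ) + b * omg' k) := by
  rw [R_eq_Lat]; rfl

lemma exists_co {k : ℕ} (c : R k) :
    ∃ ab : ℤ × ℤ, (c : ℝ × ℝ)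
      = ((ab.1:ℝ) + ab.2 * omg k, (ab.1:ℝ) + ab.2 * omg' k) := by
  obtain ⟨a, b, h⟩ := mem_R_iff.mp c.2
  exact ⟨(a,b), h⟩

noncomputable def co {k : ℕ} (c : R k) : ℤ × ℤ := (exists_co c).choose

lemma co_spec {k : ℕ} (c : R k) :
    (c : ℝ × ℝ) = (((co c).1:ℝ) + (co c).2 * omg k, ((co c).1:ℝ) + (co c).2 * omg' k) :=
  (exists_co c).choose_spec

def ofCo (k : ℕ) (a b : ℤ) : R k :=
  ⟨((a:ℝ)+b*omg k, (a:ℝ)+b*omg' k), by rw [R_eq_Lat]; exact ⟨a, b, rfl⟩⟩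

noncomputable def NmZ {k : ℕ} (c : R k) : ℤ :=
  (co c).1^2 + (co c).1*(co c).2*tZ k + (co c).2^2 * nZ k

lemma Nm_eq {k : ℕ} (c : R k) : Nm k c = (NmZ c : ℝ) := by
  have h := co_spec c
  unfold Nm NmZ
  rw [h]
  have ht := omg_add_omg' k
  have hn := omg_mul_omg' k
  push_cast
  rw [← ht, ← hn]
  ring

-- irrationality
lemma irr_sqrt {k : ℕ} (hk : Squarefree k) (hk1 : 1 < k) : Irrational (Real.sqrt k) := by
  rw [irrational_sqrt_natCast_iff]
  rintro ⟨m, hm⟩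
  have h1 : IsUnit m := hk m (by rw [hm])
  rw [Nat.isUnit_iff] at h1
  rw [h1] at hm
  omega

lemma irr_omg {k : ℕ} (hk : Squarefree k) (hk1 : 1 < k) : Irrational (omg k) := by
  have h1 : Irrational (1 + Real.sqrt k) := by
    have := (irr_sqrt hk hk1).ratCast_add 1
    simpa using this
  unfold omg k0
  split
  · have := h1.div_natCast (m := 2) (by norm_num)
    simpa using this
  · simpa using h1

lemma irr_omg' {k : ℕ} (hk : Squarefree k) (hk1 : 1 < k) : Irrational (omg' k) := by
  have h1 : Irrational (1 - Real.sqrt k) := by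
    have := ((irr_sqrt hk hk1).neg).ratCast_add 1
    simpa [sub_eq_add_neg] using this
  unfold omg' k0
  split
  · have := h1.div_natCast (m := 2) (by norm_num)
    simpa using this
  · simpa using h1

lemma coord_ne_zero {k : ℕ} (hk : Squarefree k) (hk1 : 1 < k) {ω : ℝ}
    (hω : Irrational ω) {a b : ℤ} (hab : ¬(a = 0 ∧ b = 0)) :
    (a:ℝ) + b * ω ≠ 0 := by
  intro h
  rcases eq_or_ne b 0 with hb | hb
  · subst hb
    simp at h
    exact hab ⟨by exact_mod_cast h, rfl⟩
  · have hbR : (b:ℝ) ≠ 0 := Int.cast_ne_zero.mpr hb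
    have : ω = ((((-a : ℤ) : ℚ) / (b:ℚ) : ℚ) : ℝ) := by
      push_cast
      field_simp
      linarith
    exact hω ⟨_, this.symm⟩

lemma val_ne_zero {k : ℕ} (hk : Squarefree k) (hk1 : 1 < k) {c : R k} (hc : c ≠ 0) :
    (c : ℝ × ℝ).1 ≠ 0 ∧ (c : ℝ × ℝ).2 ≠ 0 := by
  have h := co_spec c
  have hab : ¬((co c).1 = 0 ∧ (co c).2 = 0) := by
    rintro ⟨h1, h2⟩
    apply hc
    apply Subtype.ext
    rw [h, h1, h2]
    norm_num
  rw [h]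
  exact ⟨coord_ne_zero hk hk1 (irr_omg hk hk1) hab,
    coord_ne_zero hk hk1 (irr_omg' hk hk1) hab⟩

lemma NmZ_ne_zero {k : ℕ} (hk : Squarefree k) (hk1 : 1 < k) {c : R k} (hc : c ≠ 0) :
    NmZ c ≠ 0 := by
  obtain ⟨h1, h2⟩ := val_ne_zero hk hk1 hc
  intro h
  have := Nm_eq c
  rw [h] at this
  simp [Nm] at this
  rcases this with h' | h'
  · exact h1 h'
  · exact h2 h'

lemma Nm_mul {k : ℕ} (c d : R k) : Nm k (c*d) = Nm k c * Nm k d := by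
  have : ((c*d : R k) : ℝ × ℝ) = (c : ℝ × ℝ) * (d : ℝ × ℝ) := rfl
  simp only [Nm, this, Prod.fst_mul, Prod.snd_mul]
  ring

lemma Nm_one {k : ℕ} : Nm k (1 : R k) = 1 := by
  simp [Nm]

lemma unit_nm_sq {k : ℕ} (u : (R k)ˣ) : (Nm k (u : R k))^2 = 1 := by
  have h1 : Nm k ((u : R k) * ((u⁻¹ : (R k)ˣ) : R k)) = 1 := by
    rw [Units.mul_inv]; exact Nm_one
  rw [Nm_mul] at h1
  simp only [Nm_eq] at h1 ⊢
  have h2 : NmZ (u : R k) * NmZ ((u⁻¹ : (R k)ˣ) : R k) = 1 := by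
    exact_mod_cast h1
  rcases Int.eq_one_or_neg_one_of_mul_eq_one' h2 with ⟨h, _⟩ | ⟨h, _⟩ <;>
    rw [h] <;> norm_num


noncomputable def cbar {k : ℕ} (c : R k) : R k :=
  ⟨Prod.swap (c : ℝ × ℝ), by
    refine mem_R_iff.mpr ⟨(co c).1 + (co c).2 * tZ k, -(co c).2, ?_⟩
    have h := co_spec c
    have ht := omg_add_omg' k
    rw [h]
    rw [Prod.ext_iff]
    constructor
    · show ((co c).1:ℝ) + (co c).2 * omg' k = _
      push_cast
      linear_combination ((co c).2 : ℝ) * ht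
    · show ((co c).1:ℝ) + (co c).2 * omg k = _
      push_cast
      linear_combination ((co c).2 : ℝ) * ht⟩

lemma mul_cbar {k : ℕ} (c : R k) : c * cbar c = ((NmZ c : ℤ) : R k) := by
  apply Subtype.ext
  have hN := Nm_eq c
  unfold Nm at hN
  show (c : ℝ × ℝ) * Prod.swap (c : ℝ × ℝ) = _
  have : (((NmZ c : ℤ) : R k) : ℝ × ℝ) = ((NmZ c : ℝ), (NmZ c : ℝ)) := by
    push_cast
    rfl
  rw [this, Prod.ext_iff]
  constructor
  · simpa [Prod.fst_mul] using hN
  · simp only [Prod.snd_mul, Prod.swap]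
    rw [← hN]; ring

lemma assoc_of_cong {k : ℕ} (hk : Squarefree k) (hk1 : 1 < k) (c c' : R k)
    (hc : c ≠ 0) (hc' : c' ≠ 0) (hnm : NmZ c = NmZ c')
    (hmod : ∃ r : R k, c - c' = ((NmZ c : ℤ) : R k) * r) :
    ∃ u : (R k)ˣ, c = (u : R k) * c' := by
  obtain ⟨r, hr⟩ := hmod
  have hx : c = c' * (1 + cbar c' * r) := by
    have h1 : ((NmZ c : ℤ) : R k) = c' * cbar c' := by rw [hnm, mul_cbar]
    rw [h1] at hr
    have : c = c' + c' * cbar c' * r := by linear_combination hr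
    rw [this]; ring
  have hy : c' = c * (1 + cbar c * (-r)) := by
    have h1 : ((NmZ c : ℤ) : R k) = c * cbar c := by rw [mul_cbar]
    rw [h1] at hr
    have : c' = c + c * cbar c * (-r) := by linear_combination -hr
    rw [this]; ring
  set x := 1 + cbar c' * r with hxdef
  set y := 1 + cbar c * (-r) with hydef
  have hcc : c = c * (y * x) := by
    calc c = c' * x := hx
    _ = (c * y) * x := by rw [← hy]
    _ = c * (y * x) := by ring
  obtain ⟨h1, h2⟩ := val_ne_zero hk hk1 hc
  have hyx : y * x = 1 := by
    apply Subtype.ext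
    have hval : (c : ℝ × ℝ) = (c : ℝ × ℝ) * ((y*x : R k) : ℝ × ℝ) := by
      exact_mod_cast congrArg (Subtype.val) hcc
    rw [Prod.ext_iff] at hval
    simp only [Prod.fst_mul, Prod.snd_mul] at hval
    have e1 : ((y*x : R k) : ℝ × ℝ).1 = 1 := by
      have := hval.1
      field_simp at this
      tauto
    have e2 : ((y*x : R k) : ℝ × ℝ).2 = 1 := by
      have := hval.2
      field_simp at this
      tauto
    show ((y*x : R k) : ℝ × ℝ) = 1
    rw [Prod.ext_iff]
    exact ⟨e1, e2⟩
  refine ⟨⟨x, y, ?_, hyx⟩, ?_⟩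
  · rw [mul_comm]; exact hyx
  · rw [hx]; ring


lemma int_abs_le_ceil {x : ℤ} {B : ℝ} (h : |(x:ℝ)| ≤ B) : |x| ≤ ⌈B⌉ := by
  have h2 : |(x:ℝ)| ≤ (⌈B⌉ : ℝ) := le_trans h (Int.le_ceil B)
  exact_mod_cast h2

lemma reps {k : ℕ} (hk : Squarefree k) (hk1 : 1 < k) (S : Set (R k)) (B : ℝ)
    (hS : ∀ c ∈ S, c ≠ 0 ∧ |Nm k c| ≤ B) :
    ∃ T : Finset (R k), (↑T : Set (R k)) ⊆ S ∧
      ∀ c ∈ S, ∃ c₀ ∈ T, ∃ u : (R k)ˣ, c = (u : R k) * c₀ := by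
  classical
  set M : ℤ := ⌈B⌉ with hM
  set ι : R k → ℤ × ℤ × ℤ := fun c =>
    (NmZ c, (co c).1 % ((NmZ c).natAbs : ℤ), (co c).2 % ((NmZ c).natAbs : ℤ)) with hι
  have hNabs : ∀ c ∈ S, 0 < ((NmZ c).natAbs : ℤ) ∧ ((NmZ c).natAbs : ℤ) ≤ M := by
    intro c hc
    obtain ⟨hc0, hcB⟩ := hS c hc
    have hne := NmZ_ne_zero hk hk1 hc0
    have habs : |(NmZ c : ℝ)| ≤ B := by rw [← Nm_eq]; exact hcB
    have h2 : |NmZ c| ≤ M := int_abs_le_ceil habs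
    have h1 : ((NmZ c).natAbs : ℤ) = |NmZ c| := (Int.abs_eq_natAbs _).symm
    exact ⟨by rw [h1]; exact abs_pos.mpr hne, by rw [h1]; exact h2⟩
  have hmem : ∀ c ∈ S,
      ι c ∈ (Finset.Icc (-M) M ×ˢ Finset.Icc 0 M ×ˢ Finset.Icc 0 M) := by
    intro c hc
    obtain ⟨hpos, hle⟩ := hNabs c hc
    obtain ⟨hc0, hcB⟩ := hS c hc
    have habs : |(NmZ c : ℝ)| ≤ B := by rw [← Nm_eq]; exact hcB
    have h2 := abs_le.mp (int_abs_le_ceil habs)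
    have hne : ((NmZ c).natAbs : ℤ) ≠ 0 := ne_of_gt hpos
    simp only [Finset.mem_product, Finset.mem_Icc, hι]
    refine ⟨⟨h2.1, h2.2⟩, ⟨Int.emod_nonneg _ hne, ?_⟩, ⟨Int.emod_nonneg _ hne, ?_⟩⟩
    · exact le_trans (le_of_lt (Int.emod_lt_of_pos _ hpos)) hle
    · exact le_trans (le_of_lt (Int.emod_lt_of_pos _ hpos)) hle
  have hassoc : ∀ c ∈ S, ∀ c' ∈ S, ι c = ι c' → ∃ u : (R k)ˣ, c = (u : R k) * c' := by
    intro c hc c' hc' h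
    simp only [hι, Prod.mk.injEq] at h
    obtain ⟨h1, h2, h3⟩ := h
    rw [← h1] at h2 h3
    have hd1 : NmZ c ∣ (co c).1 - (co c').1 := by
      have hdd := Int.ModEq.dvd (h2 : Int.ModEq (((NmZ c).natAbs : ℤ)) ((co c).1) ((co c').1))
      have := (Int.natAbs_dvd).mp ((dvd_neg.mpr hdd))
      simpa using this
    have hd2 : NmZ c ∣ (co c).2 - (co c').2 := by
      have hdd := Int.ModEq.dvd (h3 : Int.ModEq (((NmZ c).natAbs : ℤ)) ((co c).2) ((co c').2))
      have := (Int.natAbs_dvd).mp ((dvd_neg.mpr hdd))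
      simpa using this
    obtain ⟨p, hp⟩ := hd1
    obtain ⟨q, hq⟩ := hd2
    refine assoc_of_cong hk hk1 c c' (hS c hc).1 (hS c' hc').1 h1 ⟨ofCo k p q, ?_⟩
    apply Subtype.ext
    have hco := co_spec c
    have hco' := co_spec c'
    have hmcast : (((NmZ c : ℤ) : R k) : ℝ × ℝ) = ((NmZ c : ℝ), (NmZ c : ℝ)) := by
      push_cast; rfl
    show (c : ℝ × ℝ) - (c' : ℝ × ℝ) = (((NmZ c : ℤ) : R k) : ℝ × ℝ) * _
    rw [hco, hco', hmcast]
    have hpR : ((co c).1 : ℝ) - ((co c').1 : ℝ) = (NmZ c : ℝ) * (p : ℝ) := by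
      exact_mod_cast congrArg (Int.cast : ℤ → ℝ) hp
    have hqR : ((co c).2 : ℝ) - ((co c').2 : ℝ) = (NmZ c : ℝ) * (q : ℝ) := by
      exact_mod_cast congrArg (Int.cast : ℤ → ℝ) hq
    rw [Prod.ext_iff]
    simp only [Prod.fst_sub, Prod.snd_sub, Prod.fst_mul, Prod.snd_mul, ofCo]
    constructor
    · linear_combination hpR + omg k * hqR
    · linear_combination hpR + omg' k * hqR
  set J := (Finset.Icc (-M) M ×ˢ Finset.Icc 0 M ×ˢ Finset.Icc 0 M).filter
    (fun j => ∃ c ∈ S, ι c = j) with hJ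
  have hchoose : ∀ j ∈ J, ∃ c ∈ S, ι c = j := fun j hj => (Finset.mem_filter.mp hj).2
  choose f hfS hfι using hchoose
  refine ⟨J.attach.image (fun j => f j.1 j.2), ?_, ?_⟩
  · intro c hc
    simp only [Finset.coe_image, Set.mem_image] at hc
    obtain ⟨j, _, rfl⟩ := hc
    exact hfS j.1 j.2
  · intro c hc
    have hjJ : ι c ∈ J := Finset.mem_filter.mpr ⟨hmem c hc, c, hc, rfl⟩
    refine ⟨f (ι c) hjJ, ?_, ?_⟩
    · exact Finset.mem_image.mpr ⟨⟨ι c, hjJ⟩, Finset.mem_attach _ _, rfl⟩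
    · exact hassoc c hc _ (hfS _ hjJ) (hfι _ hjJ).symm


lemma k0_pos (k : ℕ) : 0 < k0 k := by
  unfold k0; split <;> norm_num

lemma delta_pos {k : ℕ} (hk1 : 1 < k) : 0 < omg k - omg' k := by
  have hkpos : (0:ℝ) < (k:ℝ) := by
    have : 0 < k := lt_trans Nat.zero_lt_one hk1
    exact_mod_cast this
  have hs : 0 < Real.sqrt k := Real.sqrt_pos.mpr hkpos
  have h0 := k0_pos k
  unfold omg omg'
  rw [div_sub_div_same]
  apply div_pos _ h0
  linarith

lemma box_finite {k : ℕ} (hk1 : 1 < k) (M₁ M₂ : ℝ) :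
    {c : R k | |(c : ℝ × ℝ).1| ≤ M₁ ∧ |(c : ℝ × ℝ).2| ≤ M₂}.Finite := by
  classical
  set δ := omg k - omg' k with hδdef
  have hδ : 0 < δ := delta_pos hk1
  set Bb : ℝ := (M₁ + M₂) / δ with hBb
  set Ba : ℝ := M₁ + Bb * |omg k| with hBa
  apply Set.Finite.of_finite_image (f := co)
  · apply Set.Finite.subset
      (Finset.finite_toSet (Finset.Icc (-⌈Ba⌉) ⌈Ba⌉ ×ˢ Finset.Icc (-⌈Bb⌉) ⌈Bb⌉))
    rintro ab ⟨c, ⟨hc1, hc2⟩, rfl⟩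
    have hco := co_spec c
    set a := (co c).1 with hadef
    set b := (co c).2 with hbdef
    have hv1 : (c : ℝ × ℝ).1 = (a:ℝ) + b * omg k := by rw [hco]
    have hv2 : (c : ℝ × ℝ).2 = (a:ℝ) + b * omg' k := by rw [hco]
    rw [hv1] at hc1
    rw [hv2] at hc2
    have e : (b:ℝ) * δ = ((a:ℝ) + b * omg k) - ((a:ℝ) + b * omg' k) := by
      rw [hδdef]; ring
    have hbabs : |(b:ℝ)| * δ ≤ M₁ + M₂ := by
      have h1 : |(b:ℝ)| * δ = |(b:ℝ) * δ| := by
        rw [abs_mul, abs_of_pos hδ]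
      rw [h1, e]
      calc |((a:ℝ) + b * omg k) - ((a:ℝ) + b * omg' k)|
          ≤ |(a:ℝ) + b * omg k| + |(a:ℝ) + b * omg' k| := abs_sub _ _
        _ ≤ M₁ + M₂ := add_le_add hc1 hc2
    have hb : |(b:ℝ)| ≤ Bb := by
      rw [hBb, le_div_iff₀ hδ]; exact hbabs
    have ha : |(a:ℝ)| ≤ Ba := by
      have h1 : (a:ℝ) = ((a:ℝ) + b * omg k) - (b:ℝ) * omg k := by ring
      calc |(a:ℝ)| = |((a:ℝ) + b * omg k) - (b:ℝ) * omg k| := by rw [← h1]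
        _ ≤ |(a:ℝ) + b * omg k| + |(b:ℝ) * omg k| := abs_sub _ _
        _ = |(a:ℝ) + b * omg k| + |(b:ℝ)| * |omg k| := by rw [abs_mul]
        _ ≤ M₁ + Bb * |omg k| :=
            add_le_add hc1 (mul_le_mul_of_nonneg_right hb (abs_nonneg _))
    simp only [Finset.coe_product, Set.mem_prod, Finset.mem_coe, Finset.mem_Icc]
    exact ⟨abs_le.mp (int_abs_le_ceil ha), abs_le.mp (int_abs_le_ceil hb)⟩
  · intro c _ c' _ h
    apply Subtype.ext
    rw [co_spec c, co_spec c', h]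



set_option maxHeartbeats 1000000 in
/-- If `C` is a hyperbolically bounded subset of `H²×H²` and `μ > 0`, then
there are finitely many elements `(c₁,d₁), …, (c_k,d_k)` of `R × R` such that
`V_{C,μ} = {(u cᵢ, u dᵢ) : 1 ≤ i ≤ k, u a unit of R}`. -/
theorem VCmu_finite_up_to_units (k : ℕ) (hk : Squarefree k) (hk1 : 1 < k)
    (C : Set Pt) (hC : HypBounded C) (μ : ℝ) (hμ : 0 < μ) :
    ∃ T : Finset (R k × R k),
      VCmu k C μ =
        {cd | ∃ i ∈ T, ∃ u : (R k)ˣ,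
          cd.1 = (u : R k) * i.1 ∧ cd.2 = (u : R k) * i.2} := by
  classical
  rcases Set.eq_empty_or_nonempty C with hCe | hCne
  · refine ⟨∅, ?_⟩
    ext cd
    simp [VCmu, hCe]
  obtain ⟨hCH, hCbd, ε, hε, hy⟩ := hC
  obtain ⟨M, hM⟩ := (isBounded_iff_forall_norm_le).mp hCbd
  have hx1M : ∀ p ∈ C, |x1 p| ≤ M := by
    intro p hp
    have h1 : ‖p.1‖ ≤ ‖p‖ := norm_fst_le p
    rw [Real.norm_eq_abs] at h1
    exact le_trans h1 (hM p hp)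
  have hx2M : ∀ p ∈ C, |x2 p| ≤ M := by
    intro p hp
    have h1 : ‖p.2.1‖ ≤ ‖p.2‖ := norm_fst_le p.2
    have h2 : ‖p.2‖ ≤ ‖p‖ := norm_snd_le p
    rw [Real.norm_eq_abs] at h1
    exact le_trans (le_trans h1 h2) (hM p hp)
  -- unit invariance
  have hinv : ∀ (u : (R k)ˣ) (c d : R k), (c, d) ∈ VCmu k C μ →
      ((u:R k) * c, (u:R k) * d) ∈ VCmu k C μ := by
    rintro u c d ⟨p, hp, hle⟩
    refine ⟨p, hp, ?_⟩
    show HNorm (((u:R k) * c : R k) : ℝ×ℝ) (((u:R k) * d : R k) : ℝ×ℝ) p ≤ μ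
    have hcoe1 : (((u:R k) * c : R k) : ℝ×ℝ) = ((u:R k) : ℝ×ℝ) * (c : ℝ×ℝ) := rfl
    have hcoe2 : (((u:R k) * d : R k) : ℝ×ℝ) = ((u:R k) : ℝ×ℝ) * (d : ℝ×ℝ) := rfl
    have heq : HNorm (((u:R k):ℝ×ℝ) * (c:ℝ×ℝ)) (((u:R k):ℝ×ℝ) * (d:ℝ×ℝ)) p
        = (Nm k (u:R k))^2 * HNorm (c:ℝ×ℝ) (d:ℝ×ℝ) p := by
      simp only [HNorm, Nm, Prod.fst_mul, Prod.snd_mul]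
      ring
    rw [hcoe1, hcoe2, heq, unit_nm_sq, one_mul]
    exact hle
  -- norm bound on first component
  have hcbound : ∀ c d : R k, (c, d) ∈ VCmu k C μ → |Nm k c| ≤ Real.sqrt μ / ε^2 := by
    rintro c d ⟨p, hp, hle⟩
    obtain ⟨hy1, hy2⟩ := hy p hp
    set c1 := (c:ℝ×ℝ).1; set c2 := (c:ℝ×ℝ).2
    set d1 := (d:ℝ×ℝ).1; set d2 := (d:ℝ×ℝ).2
    have hF : ((c1 * x1 p + d1)^2 + c1^2 * (y1 p)^2) *
        ((c2 * x2 p + d2)^2 + c2^2 * (y2 p)^2) ≤ μ := hle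
    have hA : c1^2 * (y1 p)^2 ≤ (c1 * x1 p + d1)^2 + c1^2 * (y1 p)^2 := by nlinarith [sq_nonneg (c1 * x1 p + d1)]
    have hB : c2^2 * (y2 p)^2 ≤ (c2 * x2 p + d2)^2 + c2^2 * (y2 p)^2 := by nlinarith [sq_nonneg (c2 * x2 p + d2)]
    have hprod : (c1^2 * (y1 p)^2) * (c2^2 * (y2 p)^2) ≤ μ := by
      refine le_trans (mul_le_mul hA hB (by positivity) (by positivity)) hF
    have e1 : ε^2 ≤ (y1 p)^2 := by nlinarith
    have e2 : ε^2 ≤ (y2 p)^2 := by nlinarith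
    have h2 : (|Nm k c| * ε^2)^2 ≤ μ := by
      have hnm : (|Nm k c| * ε^2)^2 = (c1^2 * c2^2) * (ε^2 * ε^2) := by
        rw [mul_pow, sq_abs]
        simp only [Nm]
        ring
      rw [hnm]
      have h3 : (c1^2 * c2^2) * (ε^2 * ε^2) ≤ (c1^2 * (y1 p)^2) * (c2^2 * (y2 p)^2) := by
        nlinarith [sq_nonneg c1, sq_nonneg c2, sq_nonneg (c1*c2), mul_le_mul e1 e2 (by positivity) (sq_nonneg _)]
      exact le_trans h3 hprod
    have h4 : |Nm k c| * ε^2 ≤ Real.sqrt μ := by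
      have := Real.sqrt_le_sqrt h2
      rwa [Real.sqrt_sq (by positivity)] at this
    exact (le_div_iff₀ (by positivity)).mpr h4
  -- bound for c = 0 pairs
  have hdbound : ∀ d : R k, ((0:R k), d) ∈ VCmu k C μ → |Nm k d| ≤ Real.sqrt μ := by
    rintro d ⟨p, hp, hle⟩
    have h0 : (((0:R k)) : ℝ×ℝ) = 0 := rfl
    have hval : HNorm (((0:R k)):ℝ×ℝ) (d:ℝ×ℝ) p = (Nm k d)^2 := by
      rw [h0]
      simp only [HNorm, Nm, Prod.fst_zero, Prod.snd_zero]
      ring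
    rw [hval] at hle
    have := Real.sqrt_le_sqrt hle
    rwa [Real.sqrt_sq_eq_abs] at this
  -- the set of second components for a fixed nonzero first component is finite
  set Dset : R k → Set (R k) := fun c₀ => {d | (c₀, d) ∈ VCmu k C μ} with hDset
  have hDfin : ∀ c₀ : R k, c₀ ≠ 0 → (Dset c₀).Finite := by
    intro c₀ hc₀
    obtain ⟨hc1ne, hc2ne⟩ := val_ne_zero hk hk1 hc₀
    set c1 := ((c₀:R k):ℝ×ℝ).1 with hc1d
    set c2 := ((c₀:R k):ℝ×ℝ).2 with hc2d
    set A1 : ℝ := Real.sqrt (μ / (c2^2 * ε^2)) + |c1| * M with hA1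
    set A2 : ℝ := Real.sqrt (μ / (c1^2 * ε^2)) + |c2| * M with hA2
    apply Set.Finite.subset (box_finite hk1 A1 A2)
    rintro d ⟨p, hp, hle⟩
    obtain ⟨hy1, hy2⟩ := hy p hp
    set d1 := (d:ℝ×ℝ).1; set d2 := (d:ℝ×ℝ).2
    have hF : ((c1 * x1 p + d1)^2 + c1^2 * (y1 p)^2) *
        ((c2 * x2 p + d2)^2 + c2^2 * (y2 p)^2) ≤ μ := hle
    have hx1 := hx1M p hp
    have hx2 := hx2M p hp
    have hpos1 : (0:ℝ) < c1^2 * ε^2 := by positivity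
    have hpos2 : (0:ℝ) < c2^2 * ε^2 := by positivity
    constructor
    · -- |d1| ≤ A1
      have h1 : (c1 * x1 p + d1)^2 * (c2^2 * ε^2) ≤ μ := by
        have hA : (c1 * x1 p + d1)^2 ≤ (c1 * x1 p + d1)^2 + c1^2 * (y1 p)^2 := by
          nlinarith [sq_nonneg (c1 * y1 p)]
        have e2 : ε^2 ≤ (y2 p)^2 := by nlinarith
        have hB : c2^2 * ε^2 ≤ (c2 * x2 p + d2)^2 + c2^2 * (y2 p)^2 := by
          nlinarith [sq_nonneg (c2 * x2 p + d2),
            mul_nonneg (sq_nonneg c2) (sub_nonneg.mpr e2)]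
        exact le_trans (mul_le_mul hA hB (le_of_lt hpos2) (by positivity)) hF
      have h2 : (c1 * x1 p + d1)^2 ≤ μ / (c2^2 * ε^2) := (le_div_iff₀ hpos2).mpr h1
      have h3 : |c1 * x1 p + d1| ≤ Real.sqrt (μ / (c2^2 * ε^2)) := by
        have := Real.sqrt_le_sqrt h2
        rwa [Real.sqrt_sq_eq_abs] at this
      calc |d1| = |(c1 * x1 p + d1) - c1 * x1 p| := by congr 1; ring
        _ ≤ |c1 * x1 p + d1| + |c1 * x1 p| := abs_sub _ _
        _ = |c1 * x1 p + d1| + |c1| * |x1 p| := by rw [abs_mul]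
        _ ≤ Real.sqrt (μ / (c2^2 * ε^2)) + |c1| * M :=
            add_le_add h3 (mul_le_mul_of_nonneg_left hx1 (abs_nonneg _))
    · -- |d2| ≤ A2
      have h1 : (c2 * x2 p + d2)^2 * (c1^2 * ε^2) ≤ μ := by
        have hA : (c2 * x2 p + d2)^2 ≤ (c2 * x2 p + d2)^2 + c2^2 * (y2 p)^2 := by
          nlinarith [sq_nonneg (c2 * y2 p)]
        have e1 : ε^2 ≤ (y1 p)^2 := by nlinarith
        have hB : c1^2 * ε^2 ≤ (c1 * x1 p + d1)^2 + c1^2 * (y1 p)^2 := by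
          nlinarith [sq_nonneg (c1 * x1 p + d1),
            mul_nonneg (sq_nonneg c1) (sub_nonneg.mpr e1)]
        calc (c2 * x2 p + d2)^2 * (c1^2 * ε^2)
            ≤ ((c1 * x1 p + d1)^2 + c1^2 * (y1 p)^2) *
              ((c2 * x2 p + d2)^2 + c2^2 * (y2 p)^2) := by
              rw [mul_comm ((c1 * x1 p + d1)^2 + c1^2 * (y1 p)^2)]
              exact mul_le_mul hA hB (le_of_lt hpos1) (by positivity)
          _ ≤ μ := hF
      have h2 : (c2 * x2 p + d2)^2 ≤ μ / (c1^2 * ε^2) := (le_div_iff₀ hpos1).mpr h1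
      have h3 : |c2 * x2 p + d2| ≤ Real.sqrt (μ / (c1^2 * ε^2)) := by
        have := Real.sqrt_le_sqrt h2
        rwa [Real.sqrt_sq_eq_abs] at this
      calc |d2| = |(c2 * x2 p + d2) - c2 * x2 p| := by congr 1; ring
        _ ≤ |c2 * x2 p + d2| + |c2 * x2 p| := abs_sub _ _
        _ = |c2 * x2 p + d2| + |c2| * |x2 p| := by rw [abs_mul]
        _ ≤ Real.sqrt (μ / (c1^2 * ε^2)) + |c2| * M :=
            add_le_add h3 (mul_le_mul_of_nonneg_left hx2 (abs_nonneg _))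
  set Dfin : R k → Finset (R k) := fun c₀ =>
    if h : (Dset c₀).Finite then h.toFinset else ∅ with hDfin'
  -- representatives for nonzero first components
  obtain ⟨Tc, hTcS, hTccov⟩ := reps hk hk1
    {c : R k | c ≠ 0 ∧ ∃ d, (c, d) ∈ VCmu k C μ} (Real.sqrt μ / ε^2)
    (by rintro c ⟨hc0, d, hd⟩; exact ⟨hc0, hcbound c d hd⟩)
  -- representatives for zero first component
  obtain ⟨Td, hTdS, hTdcov⟩ := reps hk hk1
    {d : R k | d ≠ 0 ∧ ((0:R k), d) ∈ VCmu k C μ} (Real.sqrt μ)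
    (by rintro d ⟨hd0, hd⟩; exact ⟨hd0, hdbound d hd⟩)
  refine ⟨{((0:R k), (0:R k))} ∪ Td.image (fun d => ((0:R k), d)) ∪
    Tc.biUnion (fun c₀ => (Dfin c₀).image (fun d => (c₀, d))), ?_⟩
  have hTsub : ∀ i ∈ ({((0:R k), (0:R k))} ∪ Td.image (fun d => ((0:R k), d)) ∪
      Tc.biUnion (fun c₀ => (Dfin c₀).image (fun d => (c₀, d)))), i ∈ VCmu k C μ := by
    intro i hi
    simp only [Finset.mem_union, Finset.mem_singleton, Finset.mem_image,
      Finset.mem_biUnion] at hi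
    rcases hi with (rfl | ⟨d₀, hd₀, rfl⟩) | ⟨c₀, hc₀, d₀, hd₀, rfl⟩
    · obtain ⟨p, hp⟩ := hCne
      refine ⟨p, hp, ?_⟩
      show HNorm (((0:R k)):ℝ×ℝ) (((0:R k)):ℝ×ℝ) p ≤ μ
      have h0 : (((0:R k)) : ℝ×ℝ) = 0 := rfl
      rw [h0]
      simp only [HNorm, Prod.fst_zero, Prod.snd_zero]
      norm_num
      exact le_of_lt hμ
    · exact (hTdS hd₀).2
    · have hc₀ne : c₀ ≠ 0 := (hTcS hc₀).1
      have hfin := hDfin c₀ hc₀ne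
      rw [hDfin'] at hd₀
      simp only [dif_pos hfin] at hd₀
      rw [Set.Finite.mem_toFinset] at hd₀
      exact hd₀
  ext cd
  constructor
  · intro hcd
    rcases eq_or_ne cd.1 0 with hc0 | hc0
    · rcases eq_or_ne cd.2 0 with hd0 | hd0
      · refine ⟨((0:R k), (0:R k)), ?_, 1, ?_, ?_⟩
        · simp
        · simp [hc0]
        · simp [hd0]
      · have hdS : cd.2 ∈ {d : R k | d ≠ 0 ∧ ((0:R k), d) ∈ VCmu k C μ} := by
          refine ⟨hd0, ?_⟩
          have : ((0:R k), cd.2) = cd := by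
            rw [← hc0]
          rw [this]
          exact hcd
        obtain ⟨d₀, hd₀T, u, hu⟩ := hTdcov cd.2 hdS
        refine ⟨((0:R k), d₀), ?_, u, ?_, hu⟩
        · simp only [Finset.mem_union, Finset.mem_singleton, Finset.mem_image]
          left; right
          exact ⟨d₀, hd₀T, rfl⟩
        · simp [hc0]
    · have hcS : cd.1 ∈ {c : R k | c ≠ 0 ∧ ∃ d, (c, d) ∈ VCmu k C μ} := by
        refine ⟨hc0, cd.2, ?_⟩
        rw [Prod.mk.eta]
        exact hcd
      obtain ⟨c₀, hc₀T, u, hu⟩ := hTccov cd.1 hcS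
      have hmem2 : ((c₀, ((u⁻¹ : (R k)ˣ) : R k) * cd.2) : R k × R k) ∈ VCmu k C μ := by
        have := hinv u⁻¹ cd.1 cd.2 (by rw [Prod.mk.eta]; exact hcd)
        have he : ((u⁻¹ : (R k)ˣ) : R k) * cd.1 = c₀ := by
          rw [hu]
          exact u.inv_mul_cancel_left c₀
        rwa [he] at this
      have hfin := hDfin c₀ (hTcS hc₀T).1
      refine ⟨(c₀, ((u⁻¹ : (R k)ˣ) : R k) * cd.2), ?_, u, hu, ?_⟩
      · simp only [Finset.mem_union, Finset.mem_biUnion, Finset.mem_image]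
        right
        refine ⟨c₀, hc₀T, ((u⁻¹ : (R k)ˣ) : R k) * cd.2, ?_, rfl⟩
        rw [hDfin']
        simp only [dif_pos hfin]
        rw [Set.Finite.mem_toFinset]
        exact hmem2
      · show cd.2 = (u : R k) * (((u⁻¹ : (R k)ˣ) : R k) * cd.2)
        rw [u.mul_inv_cancel_left]
  · rintro ⟨i, hiT, u, hu1, hu2⟩
    have hiV := hTsub i hiT
    have := hinv u i.1 i.2 (by rw [Prod.mk.eta]; exact hiV)
    have he : cd = ((u : R k) * i.1, (u : R k) * i.2) := Prod.ext hu1 hu2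
    rw [he]
    exact this


end Hilbert
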